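/- Let M be a (not necessarily commutative) monoid and let A be the free vector space on words (finite sequences) over M. Define inductively, for words X = x₁⋯xₙ and Y = y₁⋯yₘ with letters in M: X ≺ Y := x₁(x₂⋯xₙ * Y), X ≻ Y := y₁(X * y₂⋯yₘ), [X,Y] := (x₁·y₁)(x₂⋯xₙ * y₂⋯yₘ), with the empty word acting as unit, and X*Y := X ≺ Y + X ≻ Y + [X,Y]. Then the product * is associative. -/

import Mathlib

open Finsupp

/-- The quasi-shuffle product of words over a monoid `M`, with values in the free
vector space on words, defined by the mutual recursion
`X*Y = X ≺ Y + X ≻ Y + [X,Y]` where `X ≺ Y = x₁(x₂⋯xₙ * Y)`,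
`X ≻ Y = y₁(X * y₂⋯yₘ)`, `[X,Y] = (x₁·y₁)(x₂⋯xₙ * y₂⋯yₘ)`,
and the empty word is the unit. -/
noncomputable def qmul {K M : Type*} [Field K] [Monoid M] :
    List M → List M → (List M →₀ K)
  | [], Y => Finsupp.single Y 1
  | x :: xs, [] => Finsupp.single (x :: xs) 1
  | x :: xs, y :: ys =>
      (qmul xs (y :: ys)).mapDomain (x :: ·)
      + (qmul (x :: xs) ys).mapDomain (y :: ·)
      + (qmul xs ys).mapDomain ((x * y) :: ·)
  termination_by X Y => X.length + Y.length
  decreasing_by all_goals (simp; try omega)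

section Aux

variable {K M : Type*} [Field K] [Monoid M]

/-- Left multiplication by a linear combination of words. -/
noncomputable def lm (f : List M →₀ K) (Z : List M) : List M →₀ K :=
  f.sum (fun W a => a • (qmul W Z : List M →₀ K))

/-- Right multiplication by a linear combination of words. -/
noncomputable def rm (X : List M) (f : List M →₀ K) : List M →₀ K :=
  f.sum (fun W a => a • (qmul X W : List M →₀ K))

theorem qmul_nil (X : List M) : qmul (K := K) X [] = Finsupp.single X 1 := by
  cases X <;> rw [qmul]

theorem lm_add (f g : List M →₀ K) (Z : List M) :
    lm (f + g) Z = lm f Z + lm g Z :=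
  Finsupp.sum_add_index' (by simp) (by intros; rw [add_smul])

theorem rm_add (X : List M) (f g : List M →₀ K) :
    rm X (f + g) = rm X f + rm X g :=
  Finsupp.sum_add_index' (by simp) (by intros; rw [add_smul])

theorem lm_mapDomain (a : M) (f : List M →₀ K) (Z : List M) :
    lm (f.mapDomain (a :: ·)) Z = f.sum (fun W c => c • (qmul (a :: W) Z : List M →₀ K)) :=
  Finsupp.sum_mapDomain_index (by simp) (by intros; rw [add_smul])

theorem rm_mapDomain (X : List M) (b : M) (f : List M →₀ K) :
    rm X (f.mapDomain (b :: ·)) = f.sum (fun W c => c • (qmul X (b :: W) : List M →₀ K)) :=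
  Finsupp.sum_mapDomain_index (by simp) (by intros; rw [add_smul])

theorem sum_smul_mapDomain (f : List M →₀ K) (h : List M → List M)
    (u : List M → (List M →₀ K)) :
    f.sum (fun W c => c • (u W).mapDomain h) = (f.sum (fun W c => c • u W)).mapDomain h := by
  induction f using Finsupp.induction_linear with
  | zero => simp
  | add f g hf hg =>
      rw [Finsupp.sum_add_index' (by simp) (fun _ _ _ => by rw [add_smul]),
        Finsupp.sum_add_index' (by simp) (fun _ _ _ => by rw [add_smul]),
        hf, hg, Finsupp.mapDomain_add]
  | single a b =>
      rw [Finsupp.sum_single_index (by simp), Finsupp.sum_single_index (by simp),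
        Finsupp.mapDomain_smul]

theorem lm_cons (a : M) (f : List M →₀ K) (z : M) (zs : List M) :
    lm (f.mapDomain (a :: ·)) (z :: zs)
      = (lm f (z :: zs)).mapDomain (a :: ·)
        + (lm (f.mapDomain (a :: ·)) zs).mapDomain (z :: ·)
        + (lm f zs).mapDomain ((a * z) :: ·) := by
  rw [lm_mapDomain]
  have : ∀ W : List M, (qmul (a :: W) (z :: zs) : List M →₀ K)
      = (qmul W (z :: zs)).mapDomain (a :: ·)
        + (qmul (a :: W) zs).mapDomain (z :: ·)
        + (qmul W zs).mapDomain ((a * z) :: ·) := fun W => by rw [qmul]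
  calc f.sum (fun W c => c • (qmul (a :: W) (z :: zs) : List M →₀ K))
      = f.sum (fun W c => c • (qmul W (z :: zs) : List M →₀ K).mapDomain (a :: ·)
          + (c • (qmul (a :: W) zs : List M →₀ K).mapDomain (z :: ·)
            + c • (qmul W zs : List M →₀ K).mapDomain ((a * z) :: ·))) := by
        exact Finsupp.sum_congr (fun W _ => by rw [this W]; module)
    _ = _ := by
        rw [Finsupp.sum_add, Finsupp.sum_add, sum_smul_mapDomain, sum_smul_mapDomain,
          sum_smul_mapDomain, lm_mapDomain]
        simp only [lm]
        rw [add_assoc]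

theorem rm_cons (x : M) (xs : List M) (b : M) (f : List M →₀ K) :
    rm (x :: xs) (f.mapDomain (b :: ·))
      = (rm xs (f.mapDomain (b :: ·))).mapDomain (x :: ·)
        + (rm (x :: xs) f).mapDomain (b :: ·)
        + (rm xs f).mapDomain ((x * b) :: ·) := by
  rw [rm_mapDomain]
  have : ∀ W : List M, (qmul (x :: xs) (b :: W) : List M →₀ K)
      = (qmul xs (b :: W)).mapDomain (x :: ·)
        + (qmul (x :: xs) W).mapDomain (b :: ·)
        + (qmul xs W).mapDomain ((x * b) :: ·) := fun W => by rw [qmul]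
  calc f.sum (fun W c => c • (qmul (x :: xs) (b :: W) : List M →₀ K))
      = f.sum (fun W c => c • (qmul xs (b :: W) : List M →₀ K).mapDomain (x :: ·)
          + (c • (qmul (x :: xs) W : List M →₀ K).mapDomain (b :: ·)
            + c • (qmul xs W : List M →₀ K).mapDomain ((x * b) :: ·))) := by
        exact Finsupp.sum_congr (fun W _ => by rw [this W]; module)
    _ = _ := by
        rw [Finsupp.sum_add, Finsupp.sum_add, sum_smul_mapDomain, sum_smul_mapDomain,
          sum_smul_mapDomain, rm_mapDomain]
        simp only [rm]
        rw [add_assoc]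

theorem lm_single_one (W Z : List M) : lm (Finsupp.single W (1 : K)) Z = qmul W Z := by
  rw [lm, Finsupp.sum_single_index (by simp), one_smul]

theorem rm_single_one (X W : List M) : rm X (Finsupp.single W (1 : K)) = qmul X W := by
  rw [rm, Finsupp.sum_single_index (by simp), one_smul]

theorem lm_qmul_nil (f : List M →₀ K) : lm f [] = f := by
  rw [lm]
  calc f.sum (fun W a => a • (qmul W [] : List M →₀ K))
      = f.sum (fun W a => Finsupp.single W a) :=
        Finsupp.sum_congr (fun W _ => by rw [qmul_nil, Finsupp.smul_single', mul_one])
    _ = f := Finsupp.sum_single f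

theorem rm_qmul_nil (f : List M →₀ K) : rm [] f = f := by
  rw [rm]
  calc f.sum (fun W a => a • (qmul ([] : List M) W : List M →₀ K))
      = f.sum (fun W a => Finsupp.single W a) :=
        Finsupp.sum_congr (fun W _ => by rw [qmul, Finsupp.smul_single', mul_one])
    _ = f := Finsupp.sum_single f

theorem qmul_assoc : ∀ X Y Z : List M,
    lm (qmul (K := K) X Y) Z = rm X (qmul (K := K) Y Z)
  | [], Y, Z => by rw [qmul, lm_single_one, rm_qmul_nil]
  | X, [], Z => by rw [qmul_nil, lm_single_one, qmul, rm_single_one]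
  | X, Y, [] => by rw [lm_qmul_nil, qmul_nil, rm_single_one]
  | x :: xs, y :: ys, z :: zs => by
    have e1 : qmul (K := K) (x :: xs) (y :: ys)
        = (qmul xs (y :: ys)).mapDomain (x :: ·)
          + (qmul (x :: xs) ys).mapDomain (y :: ·)
          + (qmul xs ys).mapDomain ((x * y) :: ·) := by rw [qmul]
    have e2 : qmul (K := K) (y :: ys) (z :: zs)
        = (qmul ys (z :: zs)).mapDomain (y :: ·)
          + (qmul (y :: ys) zs).mapDomain (z :: ·)
          + (qmul ys zs).mapDomain ((y * z) :: ·) := by rw [qmul]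
    have h1 : lm (qmul (K := K) xs (y :: ys)) (z :: zs) = rm xs (qmul (y :: ys) (z :: zs)) :=
      qmul_assoc _ _ _
    have h2 : lm (qmul (K := K) (x :: xs) ys) (z :: zs) = rm (x :: xs) (qmul ys (z :: zs)) :=
      qmul_assoc _ _ _
    have h3 : lm (qmul (K := K) xs ys) (z :: zs) = rm xs (qmul ys (z :: zs)) :=
      qmul_assoc _ _ _
    have h4 : lm (qmul (K := K) (x :: xs) (y :: ys)) zs = rm (x :: xs) (qmul (y :: ys) zs) :=
      qmul_assoc _ _ _
    have h5 : lm (qmul (K := K) xs (y :: ys)) zs = rm xs (qmul (y :: ys) zs) :=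
      qmul_assoc _ _ _
    have h6 : lm (qmul (K := K) (x :: xs) ys) zs = rm (x :: xs) (qmul ys zs) :=
      qmul_assoc _ _ _
    have h7 : lm (qmul (K := K) xs ys) zs = rm xs (qmul ys zs) :=
      qmul_assoc _ _ _
    rw [e1, lm_add, lm_add, lm_cons, lm_cons, lm_cons,
      e2, rm_add, rm_add, rm_cons, rm_cons, rm_cons,
      h1, h2, h3, h5, h6, h7, ← h4]
    rw [show rm (K := K) xs (qmul (y :: ys) (z :: zs))
        = rm xs ((qmul ys (z :: zs)).mapDomain (y :: ·))
          + rm xs ((qmul (y :: ys) zs).mapDomain (z :: ·))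
          + rm xs ((qmul ys zs).mapDomain ((y * z) :: ·)) from by
        rw [e2, rm_add, rm_add]]
    rw [show lm (qmul (K := K) (x :: xs) (y :: ys)) zs
        = lm ((qmul xs (y :: ys)).mapDomain (x :: ·)) zs
          + lm ((qmul (x :: xs) ys).mapDomain (y :: ·)) zs
          + lm ((qmul xs ys).mapDomain ((x * y) :: ·)) zs from by
        rw [e1, lm_add, lm_add]]
    rw [Finsupp.mapDomain_add, Finsupp.mapDomain_add, Finsupp.mapDomain_add,
      Finsupp.mapDomain_add, mul_assoc]
    abel
  termination_by X Y Z => X.length + Y.length + Z.length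
  decreasing_by all_goals (simp; try omega)

end Aux

/-- The bilinear extension of the quasi-shuffle product of words over a monoid is
associative. -/
theorem stmt_14 {K M : Type*} [Field K] [CharZero K] [Monoid M] :
    ∀ X Y Z : List M,
      (qmul (K := K) X Y).sum (fun W a => a • (qmul W Z : List M →₀ K))
        = (qmul (K := K) Y Z).sum (fun W a => a • (qmul X W : List M →₀ K)) := by
  intro X Y Z
  exact qmul_assoc X Y Z
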